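/- Let ξ_1, ..., ξ_{r-2} be invertible elements of a commutative ring and let ε_n := E_n(ξ_1, ξ_1^{-1}, ..., ξ_{r-2}, ξ_{r-2}^{-1}) (with ε_n = 0 for n < 0). Then for every n ≥ 0, the n-th elementary symmetric polynomial in the 2r variables -1, -1, 1, 1, -ξ_1, ..., -ξ_{r-2}, -ξ_1^{-1}, ..., -ξ_{r-2}^{-1} equals (-1)^n (ε_n - 2ε_{n-2} + ε_{n-4}). -/

import Mathlib

/-- `E l d`: the `d`-th elementary symmetric polynomial of the list `l`,
with the convention `E l d = 0` for `d < 0` (and automatically `E l d = 0`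
when `d` exceeds the length of `l`, and `E l 0 = 1`). -/
noncomputable def E {R : Type*} [CommRing R] (l : List R) (d : ℤ) : R :=
  if d < 0 then 0 else Multiset.esymm (l : Multiset R) d.toNat

section aux

variable {R : Type*} [CommRing R]

/-- `E` extended to multisets. -/
noncomputable def Gaux (m : Multiset R) (d : ℤ) : R :=
  if d < 0 then 0 else Multiset.esymm m d.toNat

lemma E_eq_Gaux (l : List R) (d : ℤ) : E l d = Gaux (l : Multiset R) d := rfl

lemma esymm_cons (a : R) (m : Multiset R) (k : ℕ) :
    Multiset.esymm (a ::ₘ m) (k + 1) = Multiset.esymm m (k + 1) + a * Multiset.esymm m k := by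
  simp only [Multiset.esymm, Multiset.powersetCard_cons, Multiset.map_add, Multiset.sum_add,
    Multiset.map_map]
  congr 1
  rw [← Multiset.sum_map_mul_left]
  congr 1
  apply Multiset.map_congr rfl
  intro t _
  simp [Multiset.prod_cons]

lemma Gaux_cons (a : R) (m : Multiset R) (d : ℤ) :
    Gaux (a ::ₘ m) d = Gaux m d + a * Gaux m (d - 1) := by
  rcases lt_trichotomy d 0 with h | h | h
  · simp [Gaux, h, show d - 1 < 0 by omega]
  · subst h
    simp [Gaux, Multiset.esymm]
  · have h1 : ¬ d < 0 := by omega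
    have h2 : ¬ d - 1 < 0 := by omega
    obtain ⟨k, hk⟩ : ∃ k : ℕ, d.toNat = k + 1 := ⟨(d - 1).toNat, by omega⟩
    simp only [Gaux, h1, h2, if_false, hk, show (d - 1).toNat = k by omega]
    exact esymm_cons a m k

lemma Gaux_neg (m : Multiset R) (d : ℤ) :
    Gaux (m.map (fun x => -x)) d = (-1) ^ d.toNat * Gaux m d := by
  by_cases h : d < 0
  · simp [Gaux, h]
  · simp only [Gaux, h, if_false]
    simp only [Multiset.esymm, Multiset.powersetCard_map, Multiset.map_map, Function.comp]
    rw [← Multiset.sum_map_mul_left]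
    apply congrArg
    apply Multiset.map_congr rfl
    intro t ht
    rw [Multiset.mem_powersetCard] at ht
    have : (t.map fun x => -x).prod = (-1) ^ Multiset.card t * t.prod := by
      induction t using Multiset.induction with
      | empty => simp
      | cons a s ih => simp [ih]; ring
    rw [this, ht.2]

lemma perm_aux {α : Type*} (k : ℕ) (f g : Fin k → α) :
    (List.ofFn f ++ List.ofFn g).Perm (List.ofFn fun j => [f j, g j]).flatten := by
  induction k with
  | zero => simp
  | succ k ih =>
    rw [List.ofFn_succ, List.ofFn_succ, List.ofFn_succ]
    show ((f 0 :: List.ofFn (f ∘ Fin.succ)) ++ (g 0 :: List.ofFn (g ∘ Fin.succ))).Perm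
      (f 0 :: g 0 :: (List.ofFn fun j => [f j.succ, g j.succ]).flatten)
    rw [List.cons_append]
    exact (List.perm_middle.cons (f 0)).trans (((ih _ _).cons (g 0)).cons (f 0))

end aux

theorem esymm_D_series_Jv {R : Type*} [CommRing R] (r : ℕ) (hr : 2 ≤ r)
    (ξ : Fin (r - 2) → Rˣ) (n : ℕ) :
    E (-1 :: -1 :: 1 :: 1 ::
        ((List.ofFn fun j => -((ξ j : R))) ++ (List.ofFn fun j => -(((ξ j)⁻¹ : Rˣ) : R))))
        n
      = (-1) ^ n *
        (E ((List.ofFn fun j => [((ξ j : R)), (((ξ j)⁻¹ : Rˣ) : R)]).flatten) n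
          - 2 * E ((List.ofFn fun j => [((ξ j : R)), (((ξ j)⁻¹ : Rˣ) : R)]).flatten) (n - 2)
          + E ((List.ofFn fun j => [((ξ j : R)), (((ξ j)⁻¹ : Rˣ) : R)]).flatten) (n - 4)) := by
  set L : List R := (List.ofFn fun j => [((ξ j : R)), (((ξ j)⁻¹ : Rˣ) : R)]).flatten with hL
  set M : Multiset R := (L : Multiset R) with hM
  have hperm : ((List.ofFn fun j => -((ξ j : R))) ++
      (List.ofFn fun j => -(((ξ j)⁻¹ : Rˣ) : R))).Perm (L.map (fun x => -x)) := by
    have h1 := perm_aux (r - 2) (fun j => -((ξ j : R))) (fun j => -(((ξ j)⁻¹ : Rˣ) : R))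
    have h2 : ((List.ofFn fun j => [-((ξ j : R)), -(((ξ j)⁻¹ : Rˣ) : R)]).flatten : List R)
        = L.map (fun x => -x) := by
      rw [hL, List.map_flatten, List.map_ofFn]
      rfl
    rw [h2] at h1
    exact h1
  have hcoe : (((List.ofFn fun j => -((ξ j : R))) ++
      (List.ofFn fun j => -(((ξ j)⁻¹ : Rˣ) : R))) : Multiset R) = M.map (fun x => -x) := by
    rw [hM, Multiset.map_coe]
    exact Quot.sound hperm
  have key : ∀ d : ℤ, E (-1 :: -1 :: 1 :: 1 ::
      ((List.ofFn fun j => -((ξ j : R))) ++ (List.ofFn fun j => -(((ξ j)⁻¹ : Rˣ) : R)))) d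
      = Gaux (M.map (fun x => -x)) d - 2 * Gaux (M.map (fun x => -x)) (d - 2)
        + Gaux (M.map (fun x => -x)) (d - 4) := by
    intro d
    rw [E_eq_Gaux]
    have : ((-1 : R) :: -1 :: 1 :: 1 ::
        ((List.ofFn fun j => -((ξ j : R))) ++ (List.ofFn fun j => -(((ξ j)⁻¹ : Rˣ) : R)))
        : Multiset R) = -1 ::ₘ -1 ::ₘ 1 ::ₘ 1 ::ₘ M.map (fun x => -x) := by
      simp [← hcoe]
    rw [this]
    simp only [Gaux_cons]
    rw [show d - 1 - 1 - 1 - 1 = d - 4 from by ring, show d - 1 - 1 - 1 = d - 3 from by ring,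
      show d - 1 - 1 = d - 2 from by ring]
    ring
  rw [key]
  have hε : ∀ k : ℕ, (k : ℤ) ≤ (n : ℤ) →
      Gaux (M.map (fun x => -x)) ((n : ℤ) - k) = (-1) ^ n * (-1)^k * Gaux M ((n : ℤ) - k) := by
    intro k hk
    rw [Gaux_neg]
    congr 1
    have : ((n : ℤ) - k).toNat = n - k := by omega
    rw [this]
    have hkn : k ≤ n := by exact_mod_cast hk
    have hk2 : ((-1 : R)) ^ k * (-1) ^ k = 1 := by
      rw [← pow_add, ← two_mul, pow_mul]; norm_num
    calc (-1 : R) ^ (n - k) = (-1) ^ (n - k) * ((-1) ^ k * (-1) ^ k) := by rw [hk2, mul_one]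
      _ = ((-1) ^ (n - k) * (-1) ^ k) * (-1) ^ k := by ring
      _ = (-1) ^ n * (-1) ^ k := by rw [← pow_add, Nat.sub_add_cancel hkn]
  have e0 : Gaux (M.map (fun x => -x)) (n : ℤ) = (-1) ^ n * Gaux M (n : ℤ) := by
    have := hε 0 (by omega); simpa using this
  have e2 : Gaux (M.map (fun x => -x)) ((n : ℤ) - 2) = (-1) ^ n * Gaux M ((n : ℤ) - 2) := by
    by_cases h : (2 : ℤ) ≤ n
    · have := hε 2 h; push_cast at this ⊢; rw [this]; ring
    · have hneg : (n : ℤ) - 2 < 0 := by omega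
      simp [Gaux, hneg]
  have e4 : Gaux (M.map (fun x => -x)) ((n : ℤ) - 4) = (-1) ^ n * Gaux M ((n : ℤ) - 4) := by
    by_cases h : (4 : ℤ) ≤ n
    · have := hε 4 h; push_cast at this ⊢; rw [this]; ring
    · have hneg : (n : ℤ) - 4 < 0 := by omega
      simp [Gaux, hneg]
  rw [e0, e2, e4]
  simp only [E_eq_Gaux, ← hM]
  ring
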